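/- Let L = (ℓ_j)_{j≥1} be a fractal string and let s ∈ ℂ with Re(s) > 1. Then the double series Σ_{j≥1} Σ_{n≥1} (n · ℓ_j^{−1})^{−s} over the frequencies n · ℓ_j^{−1} of L converges absolutely, and its sum equals ζ(s) · Σ_{j≥1} ℓ_j^s, where ζ is the Riemann zeta function; i.e., the spectral zeta function of L factors as ζ_ν(s) = ζ(s) · ζ_L(s). -/

import Mathlib

open Filter Topology

/-- A fractal string: a nonincreasing, positive, summable sequence of lengths
`ℓ 0 ≥ ℓ 1 ≥ ⋯ > 0` (indexed from `0`, representing `ℓ_1, ℓ_2, …`). -/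
def IsFractalString (ℓ : ℕ → ℝ) : Prop :=
  (∀ j, 0 < ℓ j) ∧ Antitone ℓ ∧ Summable ℓ

/-- The volume `V(ε) = ∑ⱼ min(ℓⱼ, 2ε)` of the inner ε-neighborhood of the boundary. -/
noncomputable def stringVol (ℓ : ℕ → ℝ) (ε : ℝ) : ℝ :=
  ∑' j, min (ℓ j) (2 * ε)

/-- Upper `d`-dimensional Minkowski content `limsup_{ε→0⁺} V(ε)/ε^{1-d}`. -/
noncomputable def upperContent (ℓ : ℕ → ℝ) (d : ℝ) : ENNReal :=
  Filter.limsup (fun ε : ℝ => ENNReal.ofReal (stringVol ℓ ε / ε ^ (1 - d))) (𝓝[>] 0)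

/-- Lower `d`-dimensional Minkowski content `liminf_{ε→0⁺} V(ε)/ε^{1-d}`. -/
noncomputable def lowerContent (ℓ : ℕ → ℝ) (d : ℝ) : ENNReal :=
  Filter.liminf (fun ε : ℝ => ENNReal.ofReal (stringVol ℓ ε / ε ^ (1 - d))) (𝓝[>] 0)

/-- The Minkowski dimension `D = inf {d ≥ 0 : M*_d < ∞}`. -/
noncomputable def minkDim (ℓ : ℕ → ℝ) : ℝ :=
  sInf {d : ℝ | 0 ≤ d ∧ upperContent ℓ d < ⊤}

/-- The spectral (frequency) counting function `N_ν(x) = ∑ⱼ ⌊ℓⱼ x⌋`. -/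
noncomputable def spectralCount (ℓ : ℕ → ℝ) (x : ℝ) : ℝ :=
  ∑' j, (⌊ℓ j * x⌋₊ : ℝ)

/-- The Weyl term `W(x) = (∑ⱼ ℓⱼ) x`. -/
noncomputable def weylTerm (ℓ : ℕ → ℝ) (x : ℝ) : ℝ :=
  (∑' j, ℓ j) * x

/-- The geometric counting function `N_L(x) = #{j ≥ 1 : ℓⱼ⁻¹ ≤ x}`. -/
noncomputable def geomCount (ℓ : ℕ → ℝ) (x : ℝ) : ℝ :=
  (({j : ℕ | (ℓ j)⁻¹ ≤ x}).ncard : ℝ)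

/-- The "asymptotic second term" `φ_ν(x) = W(x) - N_ν(x)`. -/
noncomputable def phiNu (ℓ : ℕ → ℝ) (x : ℝ) : ℝ :=
  weylTerm ℓ x - spectralCount ℓ x

/-- `L` is Minkowski measurable (in dimension `D`) with Minkowski content `M`:
`V(ε)/ε^{1-D} → M` as `ε → 0⁺`. -/
def MinkMeasurableWith (ℓ : ℕ → ℝ) (D M : ℝ) : Prop :=
  Tendsto (fun ε : ℝ => stringVol ℓ ε / ε ^ (1 - D)) (𝓝[>] (0:ℝ)) (𝓝 M)

/-- `L` is Minkowski measurable in dimension `D` (with some positive finite content). -/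
def MinkMeasurable (ℓ : ℕ → ℝ) (D : ℝ) : Prop :=
  ∃ M : ℝ, 0 < M ∧ MinkMeasurableWith ℓ D M

/-- Hypothesis (6.1): `N_ν(x) = W(x) - C x^D + o(x^D)` as `x → +∞`. -/
def SpectralAsymp (ℓ : ℕ → ℝ) (D C : ℝ) : Prop :=
  Tendsto (fun x : ℝ => (spectralCount ℓ x - (weylTerm ℓ x - C * x ^ D)) / x ^ D)
    atTop (𝓝 0)

/-- The inverse spectral problem `(ISP)_D`: every fractal string of Minkowski
dimension `D` satisfying (6.1) is Minkowski measurable. -/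
def ISP (D : ℝ) : Prop :=
  ∀ ℓ : ℕ → ℝ, IsFractalString ℓ → minkDim ℓ = D →
    (∃ C : ℝ, C ≠ 0 ∧ SpectralAsymp ℓ D C) → MinkMeasurable ℓ D

/-- (Factorization of the spectral zeta function) For a fractal
string `L` and `Re(s) > 1`, the series `∑_{j,n} (n ℓ_j⁻¹)^{-s}` over the
frequencies converges absolutely and `ζ_ν(s) = ζ(s) ζ_L(s)`. -/
theorem spectral_zeta_factorization (ℓ : ℕ → ℝ) (h : IsFractalString ℓ)
    (s : ℂ) (hs : 1 < s.re) :
    Summable (fun p : ℕ × ℕ =>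
      (((((p.2 : ℝ) + 1) * (ℓ p.1)⁻¹ : ℝ) : ℂ)) ^ (-s)) ∧
    (∑' p : ℕ × ℕ, (((((p.2 : ℝ) + 1) * (ℓ p.1)⁻¹ : ℝ) : ℂ)) ^ (-s)) =
      riemannZeta s * ∑' j : ℕ, ((ℓ j : ℝ) : ℂ) ^ s := by
  obtain ⟨hpos, -, hsum⟩ := h
  have key : ∀ p : ℕ × ℕ,
      (((((p.2 : ℝ) + 1) * (ℓ p.1)⁻¹ : ℝ) : ℂ)) ^ (-s)
        = (1 / (((p.2 : ℝ) + 1 : ℝ) : ℂ) ^ s) * ((ℓ p.1 : ℝ) : ℂ) ^ s := by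
    intro p
    have h1 : (0:ℝ) ≤ (p.2 : ℝ) + 1 := by positivity
    have h2 : (0:ℝ) ≤ (ℓ p.1)⁻¹ := inv_nonneg.mpr (hpos p.1).le
    rw [Complex.ofReal_mul, Complex.mul_cpow_ofReal_nonneg h1 h2, Complex.ofReal_inv,
      Complex.inv_cpow _ _ (by
        rw [Complex.arg_ofReal_of_nonneg (hpos p.1).le]
        exact Real.pi_ne_zero.symm),
      Complex.cpow_neg, Complex.cpow_neg, inv_inv, one_div]
  have hnormn : Summable (fun n : ℕ => ‖1 / (((n : ℝ) + 1 : ℝ) : ℂ) ^ s‖) := by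
    have h0 : Summable (fun n : ℕ => ((n : ℝ) + 1) ^ (-s.re)) := by
      have h1 := Real.summable_nat_rpow (p := -s.re) |>.mpr (by linarith)
      exact ((summable_nat_add_iff 1).mpr h1).congr fun n => by push_cast; ring_nf
    refine h0.congr fun n => ?_
    rw [norm_div, norm_one,
      Complex.norm_cpow_eq_rpow_re_of_pos (by positivity), one_div,
      ← Real.rpow_neg (by positivity)]
  have heq : ∀ j, ‖((ℓ j : ℝ) : ℂ) ^ s‖ = (ℓ j) ^ s.re := fun j => by
    rw [Complex.norm_cpow_eq_rpow_re_of_pos (hpos j)]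
  have hev : ∀ᶠ j in atTop, ‖‖((ℓ j : ℝ) : ℂ) ^ s‖‖ ≤ ℓ j := by
    filter_upwards [hsum.tendsto_atTop_zero.eventually (eventually_le_nhds one_pos)] with j hj
    rw [norm_norm, heq j]
    calc (ℓ j) ^ s.re ≤ (ℓ j) ^ (1:ℝ) :=
          Real.rpow_le_rpow_of_exponent_ge (hpos j) hj (by linarith)
      _ = ℓ j := Real.rpow_one _
  have hnormj : Summable (fun j : ℕ => ‖((ℓ j : ℝ) : ℂ) ^ s‖) :=
    Summable.of_norm_bounded_eventually_nat hsum hev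
  have hprod : Summable (fun p : ℕ × ℕ =>
      (1 / (((p.2 : ℝ) + 1 : ℝ) : ℂ) ^ s) * ((ℓ p.1 : ℝ) : ℂ) ^ s) := by
    refine Summable.of_norm ?_
    have := hnormj.mul_of_nonneg hnormn (fun j => norm_nonneg _) (fun n => norm_nonneg _)
    refine this.congr fun p => ?_
    rw [norm_mul, mul_comm]
  refine ⟨(summable_congr key).mpr hprod, ?_⟩
  calc (∑' p : ℕ × ℕ, (((((p.2 : ℝ) + 1) * (ℓ p.1)⁻¹ : ℝ) : ℂ)) ^ (-s))
      = ∑' p : ℕ × ℕ, (((ℓ p.1 : ℝ) : ℂ) ^ s) * (1 / (((p.2 : ℝ) + 1 : ℝ) : ℂ) ^ s) := by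
        exact tsum_congr fun p => by rw [key p, mul_comm]
    _ = (∑' j : ℕ, ((ℓ j : ℝ) : ℂ) ^ s) * (∑' n : ℕ, 1 / (((n : ℝ) + 1 : ℝ) : ℂ) ^ s) :=
        (tsum_mul_tsum_of_summable_norm hnormj hnormn).symm
    _ = riemannZeta s * ∑' j : ℕ, ((ℓ j : ℝ) : ℂ) ^ s := by
        rw [mul_comm]
        congr 1
        rw [zeta_eq_tsum_one_div_nat_add_one_cpow hs]
        exact tsum_congr fun n => by push_cast; ring_nf
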